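/- For x > 0 set f(x) = sin²(1/√x), and for each integer i ≥ 1 set Iᵢ = [1/(π(i+1))², 1/(πi)²]. Then for every real C with 0 < C < 1, the sum over i ≥ 1 of the Lebesgue integrals of (C² − f(x))^{−1/2} over the sets {x ∈ Iᵢ : f(x) < C²} is finite. -/

import Mathlib

open MeasureTheory Set Real

private theorem lintegral_image_eq_lintegral_abs_deriv_mul'
    {s : Set ℝ} {f : ℝ → ℝ} {f' : ℝ → ℝ} (hs : MeasurableSet s)
    (hf' : ∀ x ∈ s, HasDerivWithinAt f (f' x) s x) (hf : Set.InjOn f s) (g : ℝ → ENNReal) :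
    ∫⁻ x in f '' s, g x = ∫⁻ x in s, ENNReal.ofReal |f' x| * g (f x) := by
  simpa only [ContinuousLinearMap.det_toSpanSingleton] using
    MeasureTheory.lintegral_image_eq_lintegral_abs_det_fderiv_mul volume hs
      (fun x hx => (hf' x hx).hasFDerivWithinAt) hf g

private theorem sin_sq_add_nat_mul_pi (n : ℕ) (x : ℝ) :
    Real.sin (x + n * π) ^ 2 = Real.sin x ^ 2 := by
  induction n with
  | zero => simp
  | succ n ih =>
      have : x + ((n : ℝ) + 1) * π = (x + n * π) + π := by ring
      push_cast
      rw [this, Real.sin_add_pi, neg_sq, ih]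

private theorem key_lb (C : ℝ) (hC0 : 0 < C) (hC1 : C < 1) (u : ℝ) (hu0 : 0 ≤ u)
    (hu2 : u ≤ π / 2) (hlt : Real.sin u ^ 2 < C ^ 2) :
    0 < Real.arcsin C - u ∧
      2 * C * Real.cos (Real.arcsin C) / π * (Real.arcsin C - u) ≤ C ^ 2 - Real.sin u ^ 2 := by
  set a := Real.arcsin C with ha_def
  have hπ : 0 < π := Real.pi_pos
  have hsa : Real.sin a = C := Real.sin_arcsin (by linarith) hC1.le
  have ha0 : 0 < a := Real.arcsin_pos.2 hC0
  have ha2 : a < π / 2 := Real.arcsin_lt_pi_div_two.2 hC1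
  have hcos : 0 < Real.cos a := Real.cos_pos_of_mem_Ioo ⟨by linarith, ha2⟩
  have hsinu0 : 0 ≤ Real.sin u := Real.sin_nonneg_of_nonneg_of_le_pi hu0 (by linarith)
  have hsinuC : Real.sin u < C := by nlinarith
  have hua : u < a := by
    by_contra h
    push_neg at h
    have := Real.strictMonoOn_sin.monotoneOn (by constructor <;> linarith : a ∈ Icc (-(π/2)) (π/2))
      (by constructor <;> linarith : u ∈ Icc (-(π/2)) (π/2)) h
    rw [hsa] at this; linarith
  refine ⟨by linarith, ?_⟩
  have h1 : 2 / π * ((a - u) / 2) ≤ Real.sin ((a - u) / 2) :=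
    Real.mul_le_sin (by linarith) (by linarith)
  have h2 : Real.cos a ≤ Real.cos ((a + u) / 2) :=
    Real.cos_le_cos_of_nonneg_of_le_pi (by linarith) (by linarith) (by linarith)
  have h3 : Real.sin a - Real.sin u = 2 * Real.sin ((a - u) / 2) * Real.cos ((a + u) / 2) :=
    Real.sin_sub_sin a u
  have hs2 : 0 ≤ Real.sin ((a - u) / 2) := by nlinarith
  have h4 : 2 / π * (a - u) * Real.cos a ≤ Real.sin a - Real.sin u := by nlinarith
  have h5 : C * (2 / π * (a - u) * Real.cos a) ≤ C * (Real.sin a - Real.sin u) :=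
    mul_le_mul_of_nonneg_left h4 hC0.le
  rw [hsa] at h5
  have h6 : 2 * C * Real.cos a / π * (a - u) = C * (2 / π * (a - u) * Real.cos a) := by ring
  nlinarith [mul_nonneg hsinu0 (by linarith : (0:ℝ) ≤ C - Real.sin u)]

private theorem one_div_sqrt_le_aux (c d X : ℝ) (hc : 0 < c) (hd : 0 < d) (h : c * d ≤ X) :
    1 / Real.sqrt X ≤ 1 / Real.sqrt c * d ^ (-(1/2) : ℝ) := by
  have h1 : Real.sqrt c * Real.sqrt d ≤ Real.sqrt X := by
    rw [← Real.sqrt_mul hc.le]; exact Real.sqrt_le_sqrt h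
  have h2 : d ^ (-(1/2) : ℝ) = 1 / Real.sqrt d := by
    rw [Real.rpow_neg hd.le, Real.sqrt_eq_rpow]
    exact (one_div _).symm
  rw [h2]
  have hcd : 0 < Real.sqrt c * Real.sqrt d := by positivity
  calc 1 / Real.sqrt X ≤ 1 / (Real.sqrt c * Real.sqrt d) :=
        one_div_le_one_div_of_le hcd h1
    _ = 1 / Real.sqrt c * (1 / Real.sqrt d) := by rw [one_div, mul_inv, one_div, one_div]

private noncomputable def bandFn (C : ℝ) : ℝ → ENNReal := fun t =>
  if Real.sin t ^ 2 < C ^ 2 then ENNReal.ofReal (1 / Real.sqrt (C ^ 2 - Real.sin t ^ 2)) else 0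

private theorem bandFn_measurable (C : ℝ) : Measurable (bandFn C) := by
  unfold bandFn
  refine Measurable.ite (measurableSet_lt (by fun_prop) measurable_const) ?_ measurable_const
  exact Measurable.ennreal_ofReal (by fun_prop)

private theorem bandFn_add_nat_mul_pi (C : ℝ) (n : ℕ) (s : ℝ) :
    bandFn C (s + n * π) = bandFn C s := by
  unfold bandFn
  rw [sin_sq_add_nat_mul_pi]

private theorem bandFn_le (C : ℝ) (hC0 : 0 < C) (hC1 : C < 1) (s : ℝ) (hs : s ∈ Icc 0 π) :
    bandFn C s ≤ ENNReal.ofReal (1 / Real.sqrt (2 * C * Real.cos (Real.arcsin C) / π)) *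
      (ENNReal.ofReal ((Real.arcsin C - s) ^ (-(1/2) : ℝ)) +
        ENNReal.ofReal ((s - (π - Real.arcsin C)) ^ (-(1/2) : ℝ))) := by
  set a := Real.arcsin C with ha_def
  set c := 2 * C * Real.cos a / π with hc_def
  have hπ : 0 < π := Real.pi_pos
  have ha2 : a < π / 2 := Real.arcsin_lt_pi_div_two.2 hC1
  have ha0 : 0 < a := Real.arcsin_pos.2 hC0
  have hcos : 0 < Real.cos a := Real.cos_pos_of_mem_Ioo ⟨by linarith, ha2⟩
  have hc : 0 < c := by positivity
  unfold bandFn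
  split_ifs with h
  · by_cases hs2 : s ≤ π / 2
    · obtain ⟨hpos, hkey⟩ := key_lb C hC0 hC1 s hs.1 hs2 h
      have hle := one_div_sqrt_le_aux c (a - s) (C ^ 2 - Real.sin s ^ 2) hc hpos hkey
      calc ENNReal.ofReal (1 / Real.sqrt (C ^ 2 - Real.sin s ^ 2))
          ≤ ENNReal.ofReal (1 / Real.sqrt c * (a - s) ^ (-(1/2) : ℝ)) :=
            ENNReal.ofReal_le_ofReal hle
        _ = ENNReal.ofReal (1 / Real.sqrt c) * ENNReal.ofReal ((a - s) ^ (-(1/2) : ℝ)) :=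
            ENNReal.ofReal_mul (by positivity)
        _ ≤ _ := mul_le_mul_right le_self_add _
    · push_neg at hs2
      have hsin : Real.sin (π - s) = Real.sin s := Real.sin_pi_sub s
      have h' : Real.sin (π - s) ^ 2 < C ^ 2 := by rw [hsin]; exact h
      obtain ⟨hpos, hkey⟩ := key_lb C hC0 hC1 (π - s) (by linarith [hs.2]) (by linarith) h'
      rw [hsin] at hkey
      have heq : a - (π - s) = s - (π - a) := by ring
      rw [heq] at hpos hkey
      have hle := one_div_sqrt_le_aux c (s - (π - a)) (C ^ 2 - Real.sin s ^ 2) hc hpos hkey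
      calc ENNReal.ofReal (1 / Real.sqrt (C ^ 2 - Real.sin s ^ 2))
          ≤ ENNReal.ofReal (1 / Real.sqrt c * (s - (π - a)) ^ (-(1/2) : ℝ)) :=
            ENNReal.ofReal_le_ofReal hle
        _ = ENNReal.ofReal (1 / Real.sqrt c) * ENNReal.ofReal ((s - (π - a)) ^ (-(1/2) : ℝ)) :=
            ENNReal.ofReal_mul (by positivity)
        _ ≤ _ := mul_le_mul_right le_add_self _
  · exact zero_le

private theorem band_lintegral_lt_top (C : ℝ) (hC0 : 0 < C) (hC1 : C < 1) :
    ∫⁻ s in Icc 0 π, bandFn C s < ⊤ := by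
  set a := Real.arcsin C with ha_def
  have base : IntervalIntegrable (fun x : ℝ => x ^ (-(1/2) : ℝ)) volume (a - π) a :=
    intervalIntegral.intervalIntegrable_rpow' (by norm_num)
  have hint1 : IntegrableOn (fun s : ℝ => (a - s) ^ (-(1/2) : ℝ)) (Icc 0 π) := by
    have h1 := (base.comp_sub_left a).symm
    rw [sub_sub_cancel, sub_self] at h1
    exact (intervalIntegrable_iff_integrableOn_Icc_of_le Real.pi_pos.le).mp h1
  have hint2 : IntegrableOn (fun s : ℝ => (s - (π - a)) ^ (-(1/2) : ℝ)) (Icc 0 π) := by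
    have h2 := base.comp_sub_right (π - a)
    rw [show a - π + (π - a) = 0 by ring, show a + (π - a) = π by ring] at h2
    exact (intervalIntegrable_iff_integrableOn_Icc_of_le Real.pi_pos.le).mp h2
  have hm1 : Measurable fun s : ℝ => ENNReal.ofReal ((a - s) ^ (-(1/2) : ℝ)) := by fun_prop
  have hm2 : Measurable fun s : ℝ => ENNReal.ofReal ((s - (π - a)) ^ (-(1/2) : ℝ)) := by fun_prop
  set Kc := ENNReal.ofReal (1 / Real.sqrt (2 * C * Real.cos a / π)) with hKc
  have hKtop : Kc ≠ ⊤ := ENNReal.ofReal_ne_top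
  calc ∫⁻ s in Icc 0 π, bandFn C s
      ≤ ∫⁻ s in Icc 0 π, Kc * (ENNReal.ofReal ((a - s) ^ (-(1/2) : ℝ)) +
          ENNReal.ofReal ((s - (π - a)) ^ (-(1/2) : ℝ))) :=
        setLIntegral_mono (by fun_prop) (bandFn_le C hC0 hC1)
    _ = Kc * ((∫⁻ s in Icc 0 π, ENNReal.ofReal ((a - s) ^ (-(1/2) : ℝ))) +
          ∫⁻ s in Icc 0 π, ENNReal.ofReal ((s - (π - a)) ^ (-(1/2) : ℝ))) := by
        rw [lintegral_const_mul' _ _ hKtop, lintegral_add_left hm1]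
    _ < ⊤ := by
        refine ENNReal.mul_lt_top ENNReal.ofReal_lt_top ?_
        exact ENNReal.add_lt_top.2 ⟨hint1.setLIntegral_lt_top, hint2.setLIntegral_lt_top⟩

private theorem band_translate (C : ℝ) (n : ℕ) :
    ∫⁻ t in Icc ((n : ℝ) * π) ((n : ℝ) * π + π), bandFn C t = ∫⁻ s in Icc 0 π, bandFn C s := by
  rw [← lintegral_indicator measurableSet_Icc, ← lintegral_indicator measurableSet_Icc]
  rw [← lintegral_add_right_eq_self
    ((Icc ((n : ℝ) * π) ((n : ℝ) * π + π)).indicator (bandFn C)) ((n : ℝ) * π)]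
  refine lintegral_congr fun x => ?_
  by_cases hx : x ∈ Icc (0 : ℝ) π
  · have hmem : x + (n : ℝ) * π ∈ Icc ((n : ℝ) * π) ((n : ℝ) * π + π) :=
      ⟨by linarith [hx.1], by linarith [hx.2]⟩
    rw [indicator_of_mem hmem, indicator_of_mem hx, bandFn_add_nat_mul_pi]
  · have hmem : x + (n : ℝ) * π ∉ Icc ((n : ℝ) * π) ((n : ℝ) * π + π) := by
      intro h
      exact hx ⟨by linarith [h.1], by linarith [h.2]⟩
    rw [indicator_of_notMem hmem, indicator_of_notMem hx]

private theorem band_integral_le (C : ℝ) (hC0 : 0 < C) (hC1 : C < 1) (i : ℕ) :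
    (∫⁻ x in {x : ℝ | x ∈ Icc (1 / (π * ((i : ℝ) + 1 + 1)) ^ 2)
            (1 / (π * ((i : ℝ) + 1)) ^ 2) ∧
          Real.sin (1 / Real.sqrt x) ^ 2 < C ^ 2},
        ENNReal.ofReal (1 / Real.sqrt (C ^ 2 - Real.sin (1 / Real.sqrt x) ^ 2)))
      ≤ ENNReal.ofReal (2 / (π * ((i : ℝ) + 1)) ^ 3) * ∫⁻ s in Icc 0 π, bandFn C s := by
  have hπ : 0 < π := Real.pi_pos
  set k : ℝ := (i : ℝ) + 1 with hk_def
  have hk1 : 1 ≤ k := by simp [hk_def]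
  set A : ℝ := π * k with hA_def
  set B : ℝ := π * (k + 1) with hB_def
  have hA : 0 < A := by positivity
  have hB : 0 < B := by positivity
  have hAB : A ≤ B := by nlinarith
  set T : Set ℝ := Icc A B ∩ {t | Real.sin t ^ 2 < C ^ 2} with hT_def
  have hT : MeasurableSet T :=
    measurableSet_Icc.inter (measurableSet_lt (by fun_prop) measurable_const)
  set φ : ℝ → ℝ := fun t => (t ^ 2)⁻¹ with hφ_def
  set f' : ℝ → ℝ := fun t => -(2 * t) / (t ^ 2) ^ 2 with hf'_def
  have htpos : ∀ t ∈ T, 0 < t := fun t ht => lt_of_lt_of_le hA ht.1.1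
  have hderiv : ∀ t ∈ T, HasDerivWithinAt φ (f' t) T t := by
    intro t ht
    have ht0 := htpos t ht
    have h := (hasDerivAt_pow 2 t).inv (pow_ne_zero 2 ht0.ne')
    have h2 : HasDerivAt φ (f' t) t := by
      have e : f' t = -(((2 : ℕ) : ℝ) * t ^ (2 - 1)) / (t ^ 2) ^ 2 := by simp [hf'_def]
      rw [e]; exact h
    exact h2.hasDerivWithinAt
  have hinj : Set.InjOn φ T := by
    intro x hx y hy hxy
    have hx0 := htpos x hx
    have hy0 := htpos y hy
    have hsq : x ^ 2 = y ^ 2 := inv_injective hxy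
    have := congrArg Real.sqrt hsq
    rwa [Real.sqrt_sq hx0.le, Real.sqrt_sq hy0.le] at this
  have himage : {x : ℝ | x ∈ Icc (1 / (π * ((i : ℝ) + 1 + 1)) ^ 2)
            (1 / (π * ((i : ℝ) + 1)) ^ 2) ∧
          Real.sin (1 / Real.sqrt x) ^ 2 < C ^ 2} = φ '' T := by
    have hAeq : π * ((i : ℝ) + 1) = A := by rw [hA_def, hk_def]
    have hBeq : π * ((i : ℝ) + 1 + 1) = B := by rw [hB_def, hk_def]
    ext x
    simp only [hT_def, mem_setOf_eq, mem_image, mem_inter_iff, mem_Icc, hAeq, hBeq]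
    constructor
    · rintro ⟨⟨hx1, hx2⟩, hx3⟩
      have hx0 : 0 < x := lt_of_lt_of_le (by positivity) hx1
      have hsx : 0 < Real.sqrt x := Real.sqrt_pos.2 hx0
      have hup : Real.sqrt x ≤ 1 / A := by
        have := Real.sqrt_le_sqrt hx2
        rwa [one_div, Real.sqrt_inv, Real.sqrt_sq hA.le, ← one_div] at this
      have hlo : 1 / B ≤ Real.sqrt x := by
        have := Real.sqrt_le_sqrt hx1
        rwa [one_div, Real.sqrt_inv, Real.sqrt_sq hB.le, ← one_div] at this
      refine ⟨1 / Real.sqrt x, ⟨⟨?_, ?_⟩, hx3⟩, ?_⟩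
      · have := one_div_le_one_div_of_le hsx hup
        rwa [one_div_one_div] at this
      · have := one_div_le_one_div_of_le (by positivity) hlo
        rwa [one_div_one_div] at this
      · rw [hφ_def]
        simp only [one_div, inv_pow, inv_inv]
        exact Real.sq_sqrt hx0.le
    · rintro ⟨t, ⟨⟨ht1, ht2⟩, ht3⟩, rfl⟩
      have ht0 : 0 < t := lt_of_lt_of_le hA ht1
      have hst : 1 / Real.sqrt (φ t) = t := by
        rw [hφ_def]
        simp only [Real.sqrt_inv, Real.sqrt_sq ht0.le, one_div, inv_inv]
      refine ⟨⟨?_, ?_⟩, ?_⟩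
      · have h2 : t ^ 2 ≤ B ^ 2 := pow_le_pow_left₀ ht0.le ht2 2
        have := one_div_le_one_div_of_le (by positivity) h2
        simpa [hφ_def, one_div] using this
      · have h2 : A ^ 2 ≤ t ^ 2 := pow_le_pow_left₀ hA.le ht1 2
        have := one_div_le_one_div_of_le (by positivity) h2
        simpa [hφ_def, one_div] using this
      · rwa [hst]
  rw [himage, lintegral_image_eq_lintegral_abs_deriv_mul' hT hderiv hinj]
  have hAB' : B = A + π := by rw [hA_def, hB_def]; ring
  calc ∫⁻ t in T, ENNReal.ofReal |f' t| *
        ENNReal.ofReal (1 / Real.sqrt (C ^ 2 - Real.sin (1 / Real.sqrt (φ t)) ^ 2))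
      ≤ ∫⁻ t in T, ENNReal.ofReal (2 / A ^ 3) * bandFn C t := by
        refine setLIntegral_mono (measurable_const.mul (bandFn_measurable C)) fun t ht => ?_
        have ht0 := htpos t ht
        have htA : A ≤ t := ht.1.1
        have hst : 1 / Real.sqrt (φ t) = t := by
          rw [hφ_def]
          simp only [Real.sqrt_inv, Real.sqrt_sq ht0.le, one_div, inv_inv]
        have habs : |f' t| = 2 / t ^ 3 := by
          rw [hf'_def]
          rw [abs_div, abs_neg, abs_of_pos (by positivity), abs_of_pos (by positivity)]
          field_simp
        have hband : bandFn C t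
            = ENNReal.ofReal (1 / Real.sqrt (C ^ 2 - Real.sin (1 / Real.sqrt (φ t)) ^ 2)) := by
          rw [hst]
          exact if_pos ht.2
        rw [habs, ← hband]
        gcongr
    _ = ENNReal.ofReal (2 / A ^ 3) * ∫⁻ t in T, bandFn C t :=
        lintegral_const_mul' _ _ ENNReal.ofReal_ne_top
    _ ≤ ENNReal.ofReal (2 / A ^ 3) * ∫⁻ t in Icc A B, bandFn C t :=
        mul_le_mul_right (lintegral_mono_set inter_subset_left) _
    _ = ENNReal.ofReal (2 / (π * ((i : ℝ) + 1)) ^ 3) * ∫⁻ s in Icc 0 π, bandFn C s := by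
        have hAcast : A = ((i + 1 : ℕ) : ℝ) * π := by rw [hA_def, hk_def]; push_cast; ring
        rw [hAB', hAcast, band_translate, ← hAcast, hA_def, hk_def]

/-- The incomplete surface with complete space of Killing orbits: with
`f(x) = sin²(1/√x)` and `Iᵢ = [1/(π(i+1))², 1/(πi)²]`, for every `0 < C < 1` the total
time `∑ᵢ ∫_{x ∈ Iᵢ, f x < C²} (C² - f x)^{-1/2} dx` spent crossing the bands is finite. -/
theorem tsum_lintegral_lt_top_sin_sq_bands (C : ℝ) (hC0 : 0 < C) (hC1 : C < 1) :
    (∑' i : ℕ,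
      ∫⁻ x in {x : ℝ | x ∈ Icc (1 / (π * ((i : ℝ) + 1 + 1)) ^ 2)
            (1 / (π * ((i : ℝ) + 1)) ^ 2) ∧
          Real.sin (1 / Real.sqrt x) ^ 2 < C ^ 2},
        ENNReal.ofReal (1 / Real.sqrt (C ^ 2 - Real.sin (1 / Real.sqrt x) ^ 2))) < ⊤ := by
  have hπ : 0 < π := Real.pi_pos
  have hsum : Summable (fun i : ℕ => 2 / (π * ((i : ℝ) + 1)) ^ 3) := by
    have h0 : Summable (fun n : ℕ => 1 / (n : ℝ) ^ 3) :=
      Real.summable_one_div_nat_pow.2 (by norm_num)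
    have h1 : Summable (fun i : ℕ => 1 / ((i : ℝ) + 1) ^ 3) := by
      have := (summable_nat_add_iff 1).2 h0
      simpa using this
    refine (h1.mul_left (2 / π ^ 3)).congr fun i => ?_
    have : ((i : ℝ) + 1) ≠ 0 := by positivity
    field_simp
  have htsum : (∑' i : ℕ, ENNReal.ofReal (2 / (π * ((i : ℝ) + 1)) ^ 3)) < ⊤ := by
    rw [← ENNReal.ofReal_tsum_of_nonneg (fun i => by positivity) hsum]
    exact ENNReal.ofReal_lt_top
  calc (∑' i : ℕ,
      ∫⁻ x in {x : ℝ | x ∈ Icc (1 / (π * ((i : ℝ) + 1 + 1)) ^ 2)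
            (1 / (π * ((i : ℝ) + 1)) ^ 2) ∧
          Real.sin (1 / Real.sqrt x) ^ 2 < C ^ 2},
        ENNReal.ofReal (1 / Real.sqrt (C ^ 2 - Real.sin (1 / Real.sqrt x) ^ 2)))
      ≤ ∑' i : ℕ, ENNReal.ofReal (2 / (π * ((i : ℝ) + 1)) ^ 3) * ∫⁻ s in Icc 0 π, bandFn C s :=
        ENNReal.tsum_le_tsum (band_integral_le C hC0 hC1)
    _ = (∑' i : ℕ, ENNReal.ofReal (2 / (π * ((i : ℝ) + 1)) ^ 3)) * ∫⁻ s in Icc 0 π, bandFn C s :=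
        ENNReal.tsum_mul_right
    _ < ⊤ := ENNReal.mul_lt_top htsum (band_lintegral_lt_top C hC0 hC1)
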